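/- Let K(f,h) := -2π ∫_{C₊} (conj f^μ(p)) h_μ(p) d³p/p₀ be the indefinite inner product on momentum-space test functions restricted to the forward light cone, and let p ⊂ X be the subspace of functions with p_μ f^μ(p) = 0 on C₊. Then K(f,f) ≥ 0 for all f ∈ p, and K(f,f) = 0 for f ∈ p if and only if f_μ(p) = p_μ h(p) on C₊ for some scalar function h (i.e. f lies in the gradient kernel p₀). -/

import Mathlib

open MeasureTheory Complex Finset

local notation "E3" => EuclideanSpace ℝ (Fin 3)

/-- Minkowski contraction `conj(f^μ(p)) g_μ(p) = conj f⁰ g⁰ − Σᵢ conj fⁱ gⁱ` of two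
(contravariant) test functions on the light cone, parametrized by `𝐩 ∈ ℝ³`. -/
noncomputable def mink (f g : EuclideanSpace ℝ (Fin 3) → Fin 4 → ℂ)
    (p : EuclideanSpace ℝ (Fin 3)) : ℂ :=
  starRingEnd ℂ (f p 0) * g p 0 - ∑ i : Fin 3, starRingEnd ℂ (f p i.succ) * g p i.succ

/-- Integrand of `K` with respect to the invariant measure `d³p / p₀` on `C₊`. -/
noncomputable def Kint (f g : EuclideanSpace ℝ (Fin 3) → Fin 4 → ℂ)
    (p : EuclideanSpace ℝ (Fin 3)) : ℂ :=
  mink f g p / (‖p‖ : ℂ)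

/-- The indefinite inner product `K(f,g) = -2π ∫_{C₊} conj(f^μ) g_μ d³p/p₀`. -/
noncomputable def Kform (f g : EuclideanSpace ℝ (Fin 3) → Fin 4 → ℂ) : ℂ :=
  (-2 * (Real.pi : ℂ)) * ∫ p : EuclideanSpace ℝ (Fin 3), Kint f g p

lemma normsq_eq (p : E3) : (‖p‖:ℝ)^2 = ∑ i, (p i)^2 := by
  rw [EuclideanSpace.norm_eq, Real.sq_sqrt (by positivity)]
  simp [_root_.sq_abs]

lemma normsqC_eq (p : E3) : ((‖p‖:ℝ):ℂ)^2 = ∑ i, ((p i:ℝ):ℂ)^2 := by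
  exact_mod_cast congrArg (fun x : ℝ => (x:ℂ)) (normsq_eq p)

lemma mink_self (f : E3 → Fin 4 → ℂ) (p : E3) :
    mink f f p = ((normSq (f p 0) - ∑ i : Fin 3, normSq (f p i.succ) : ℝ) : ℂ) := by
  simp only [mink]
  push_cast
  congr 1
  · rw [← Complex.mul_conj (f p 0)]; ring
  · exact Finset.sum_congr rfl fun i _ => by rw [← Complex.mul_conj]; ring

noncomputable def mink' (f : E3 → Fin 4 → ℂ) (p : E3) : ℝ :=
  normSq (f p 0) - ∑ i : Fin 3, normSq (f p i.succ)

lemma mink'_cont (f : E3 → Fin 4 → ℂ) (hf : Continuous f) : Continuous (mink' f) := by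
  have h0 : Continuous fun p : E3 => f p 0 := (continuous_apply _).comp hf
  have hs : ∀ i : Fin 3, Continuous fun p : E3 => f p i.succ :=
    fun i => (continuous_apply _).comp hf
  exact (Complex.continuous_normSq.comp h0).sub
    (continuous_finset_sum _ fun i _ => Complex.continuous_normSq.comp (hs i))

lemma mink'_nonpos (f : E3 → Fin 4 → ℂ) (p : E3) (hp : p ≠ 0)
    (ht : (‖p‖ : ℂ) * f p 0 = ∑ i : Fin 3, (p i : ℂ) * f p i.succ) :
    mink' f p ≤ 0 := by
  have hpn : (0:ℝ) < ‖p‖ := norm_pos_iff.mpr hp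
  have habs : ‖p‖ * ‖f p 0‖ ≤ ∑ i : Fin 3, |p i| * ‖f p i.succ‖ := by
    calc ‖p‖ * ‖f p 0‖ = ‖(‖p‖:ℂ) * f p 0‖ := by
          simp [map_mul, Complex.norm_real, Real.norm_eq_abs, abs_of_pos hpn]
      _ = ‖∑ i : Fin 3, (p i : ℂ) * f p i.succ‖ := by rw [ht]
      _ ≤ ∑ i : Fin 3, ‖(p i : ℂ) * f p i.succ‖ :=
          norm_sum_le _ _
      _ = ∑ i : Fin 3, |p i| * ‖f p i.succ‖ := by
          simp [map_mul, Complex.norm_real, Real.norm_eq_abs]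
  have hcs : (∑ i : Fin 3, |p i| * ‖f p i.succ‖)^2 ≤
      (∑ i : Fin 3, |p i|^2) * ∑ i : Fin 3, ‖f p i.succ‖^2 :=
    Finset.sum_mul_sq_le_sq_mul_sq _ _ _
  have h1 : (‖p‖ * ‖f p 0‖)^2 ≤
      (∑ i : Fin 3, |p i|^2) * ∑ i : Fin 3, ‖f p i.succ‖^2 := by
    refine le_trans ?_ hcs
    apply pow_le_pow_left₀ (by positivity) habs
  have h2 : ∑ i : Fin 3, |p i|^2 = ‖p‖^2 := by
    rw [normsq_eq]; simp [_root_.sq_abs]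
  rw [h2, mul_pow] at h1
  have h3 : ‖f p 0‖^2 ≤ ∑ i : Fin 3, ‖f p i.succ‖^2 := by
    have := (mul_le_mul_iff_right₀ (by positivity : (0:ℝ) < ‖p‖^2)).mp
      (by linarith : ‖p‖^2 * ‖f p 0‖^2 ≤ ‖p‖^2 * ∑ i : Fin 3, ‖f p i.succ‖^2)
    exact this
  unfold mink'
  simp only [← Complex.sq_norm]
  linarith

lemma eq_case (f : E3 → Fin 4 → ℂ) (p : E3) (hp : p ≠ 0)
    (ht : (‖p‖ : ℂ) * f p 0 = ∑ i : Fin 3, (p i : ℂ) * f p i.succ)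
    (h0 : mink' f p = 0) :
    ∀ i : Fin 3, f p i.succ = (p i : ℂ) * (f p 0 / (‖p‖ : ℂ)) := by
  have hpn : ((‖p‖:ℝ):ℂ) ≠ 0 := by
    simpa using (norm_ne_zero_iff.mpr hp)
  set c : ℂ := f p 0 / (‖p‖ : ℂ) with hc
  set g : Fin 3 → ℂ := fun i => f p i.succ - (p i : ℂ) * c with hg
  have hconj : (‖p‖:ℂ) * starRingEnd ℂ (f p 0)
      = ∑ i : Fin 3, (p i : ℂ) * starRingEnd ℂ (f p i.succ) := by
    have := congrArg (starRingEnd ℂ) ht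
    simpa [map_mul, map_sum, Complex.conj_ofReal] using this
  have key : ∑ i : Fin 3, g i * starRingEnd ℂ (g i) = 0 := by
    have e1 : ∀ i ∈ Finset.univ, g i * starRingEnd ℂ (g i) =
        f p i.succ * starRingEnd ℂ (f p i.succ)
          - starRingEnd ℂ c * ((p i:ℂ) * f p i.succ)
          - c * ((p i:ℂ) * starRingEnd ℂ (f p i.succ))
          + (c * starRingEnd ℂ c) * ((p i:ℂ))^2 := by
      intro i _
      simp only [hg, map_sub, map_mul, Complex.conj_ofReal]
      ring
    rw [Finset.sum_congr rfl e1]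
    simp only [Finset.sum_add_distrib, Finset.sum_sub_distrib, ← Finset.mul_sum]
    rw [← ht, ← hconj, ← normsqC_eq]
    have hm : (f p 0 * starRingEnd ℂ (f p 0) : ℂ)
        = ∑ i : Fin 3, f p i.succ * starRingEnd ℂ (f p i.succ) := by
      have : mink f f p = 0 := by
        rw [mink_self]
        exact_mod_cast congrArg (fun x : ℝ => (x:ℂ)) h0
      simp only [mink] at this
      have := sub_eq_zero.mp this
      rw [show starRingEnd ℂ (f p 0) * f p 0 = f p 0 * starRingEnd ℂ (f p 0) from mul_comm _ _] at this
      rw [this]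
      exact Finset.sum_congr rfl fun i _ => mul_comm _ _
    rw [← hm]
    simp only [hc, map_div₀, Complex.conj_ofReal]
    field_simp
    ring
  have hre : ∑ i : Fin 3, normSq (g i) = 0 := by
    have : ((∑ i : Fin 3, normSq (g i) : ℝ) : ℂ) = 0 := by
      push_cast
      rw [← key]
      exact Finset.sum_congr rfl fun i _ => (Complex.mul_conj (g i)).symm
    exact_mod_cast this
  intro i
  have hi : normSq (g i) = 0 := by
    have := (Finset.sum_eq_zero_iff_of_nonneg
      (fun j _ => Complex.normSq_nonneg (g j))).mp hre i (Finset.mem_univ i)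
    exact this
  have : g i = 0 := Complex.normSq_eq_zero.mp hi
  have := sub_eq_zero.mp this
  exact this

lemma mink_zero_of_h (f : E3 → Fin 4 → ℂ) (h : E3 → ℂ) (p : E3)
    (h1 : f p 0 = (‖p‖ : ℂ) * h p)
    (h2 : ∀ i : Fin 3, f p i.succ = (p i : ℂ) * h p) :
    mink f f p = 0 := by
  have e : ∀ i ∈ Finset.univ, starRingEnd ℂ (f p i.succ) * f p i.succ
      = ((p i:ℂ))^2 * (starRingEnd ℂ (h p) * h p) := by
    intro i _
    rw [h2 i]
    simp only [map_mul, Complex.conj_ofReal]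
    ring
  rw [mink, h1, Finset.sum_congr rfl e, ← Finset.sum_mul]
  simp only [map_mul, Complex.conj_ofReal]
  linear_combination (starRingEnd ℂ (h p) * h p) * (normsqC_eq p)

lemma f_zero_at_origin (f : E3 → Fin 4 → ℂ) (hcont : Continuous f)
    (hall : ∀ p : E3, p ≠ 0 → ∀ i : Fin 3, f p i.succ = (p i : ℂ) * (f p 0 / (‖p‖ : ℂ))) :
    ∀ μ : Fin 4, f 0 μ = 0 := by
  have hx : ∀ j : Fin 3, Filter.Tendsto
      (fun n : ℕ => (((n:ℝ)+1)⁻¹ • EuclideanSpace.single j (1:ℝ) : E3))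
      Filter.atTop (nhds 0) := by
    intro j
    have h1 : Filter.Tendsto (fun n : ℕ => ((n:ℝ)+1)⁻¹) Filter.atTop (nhds 0) := by
      simpa [one_div] using tendsto_one_div_add_atTop_nhds_zero_nat (𝕜 := ℝ)
    have := h1.smul_const (EuclideanSpace.single j (1:ℝ))
    simpa using this
  have hxne : ∀ (j : Fin 3) (n : ℕ),
      (((n:ℝ)+1)⁻¹ • EuclideanSpace.single j (1:ℝ) : E3) ≠ 0 := by
    intro j n h
    have := congrArg (fun x : E3 => x j) h
    simp [EuclideanSpace.single_apply] at this
    have : ((n:ℝ)+1) ≠ 0 := by positivity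
    simp_all
  have hxi : ∀ (j : Fin 3) (n : ℕ) (i : Fin 3),
      ((((n:ℝ)+1)⁻¹ • EuclideanSpace.single j (1:ℝ) : E3)) i
        = if i = j then ((n:ℝ)+1)⁻¹ else 0 := by
    intro j n i
    simp [EuclideanSpace.single_apply]
  have hlim : ∀ (j : Fin 3) (μ : Fin 4), Filter.Tendsto
      (fun n : ℕ => f (((n:ℝ)+1)⁻¹ • EuclideanSpace.single j (1:ℝ)) μ)
      Filter.atTop (nhds (f 0 μ)) := by
    intro j μ
    exact (((continuous_apply μ).comp hcont).tendsto 0).comp (hx j)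
  -- spatial components vanish at 0
  have hsucc : ∀ i : Fin 3, f 0 i.succ = 0 := by
    intro i
    set j : Fin 3 := if i = 0 then 1 else 0 with hj
    have hji : i ≠ j := by
      rcases Fin.eq_zero_or_eq_succ i with h | h <;> fin_cases i <;> simp [hj]
    have hzero : ∀ n : ℕ,
        f (((n:ℝ)+1)⁻¹ • EuclideanSpace.single j (1:ℝ)) i.succ = 0 := by
      intro n
      rw [hall _ (hxne j n) i, hxi j n i, if_neg hji]
      simp
    have := hlim j i.succ
    rw [show (fun n : ℕ => f (((n:ℝ)+1)⁻¹ • EuclideanSpace.single j (1:ℝ)) i.succ)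
        = fun _ : ℕ => (0:ℂ) from funext hzero] at this
    exact (tendsto_nhds_unique tendsto_const_nhds this).symm
  intro μ
  rcases Fin.eq_zero_or_eq_succ μ with h | ⟨i, rfl⟩
  · subst h
    -- use direction j = 0
    have hnorm : ∀ n : ℕ,
        ‖(((n:ℝ)+1)⁻¹ • EuclideanSpace.single (0:Fin 3) (1:ℝ) : E3)‖ = ((n:ℝ)+1)⁻¹ := by
      intro n
      rw [norm_smul, EuclideanSpace.norm_single]
      simp [Real.norm_eq_abs, abs_of_pos (by positivity : (0:ℝ) < ((n:ℝ)+1)⁻¹)]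
      positivity
    have heq : ∀ n : ℕ,
        f (((n:ℝ)+1)⁻¹ • EuclideanSpace.single (0:Fin 3) (1:ℝ)) 0
          = f (((n:ℝ)+1)⁻¹ • EuclideanSpace.single (0:Fin 3) (1:ℝ)) (0:Fin 3).succ := by
      intro n
      set q : E3 := ((n:ℝ)+1)⁻¹ • EuclideanSpace.single (0:Fin 3) (1:ℝ) with hq
      have hq0 : (q 0 : ℝ) = ((n:ℝ)+1)⁻¹ := by rw [hq, hxi 0 n 0]; simp
      have h1 : f q (0:Fin 3).succ = (q 0 : ℂ) * (f q 0 / (‖q‖ : ℂ)) :=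
        hall q (hxne 0 n) 0
      rw [h1, hq0, hnorm n]
      have : (((((n:ℝ)+1)⁻¹ : ℝ)) : ℂ) ≠ 0 := by
        exact_mod_cast (by positivity : ((n:ℝ)+1)⁻¹ ≠ 0)
      rw [mul_comm, div_mul_cancel₀ _ this]
    have t1 := hlim 0 0
    rw [show (fun n : ℕ => f (((n:ℝ)+1)⁻¹ • EuclideanSpace.single (0:Fin 3) (1:ℝ)) 0)
        = (fun n : ℕ => f (((n:ℝ)+1)⁻¹ • EuclideanSpace.single (0:Fin 3) (1:ℝ)) (0:Fin 3).succ)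
        from funext heq] at t1
    have t2 := hlim 0 (0:Fin 3).succ
    have := tendsto_nhds_unique t1 t2
    rw [this, hsucc 0]
  · exact hsucc i

/-- Let `f` be (the light-cone restriction of) a test function satisfying the
transversality condition `p_μ f^μ(p) = 0` on `C₊` (i.e. `‖𝐩‖ f⁰(p) = 𝐩 · 𝐟(p)`).  Then
`K(f,f) ≥ 0` (real and nonnegative), and `K(f,f) = 0` iff `f` is a gradient:
`f^μ(p) = p^μ h(p)` on `C₊` for some scalar function `h`. -/
theorem stmt_18 (f : EuclideanSpace ℝ (Fin 3) → Fin 4 → ℂ)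
    (hcont : Continuous f)
    (hint : Integrable (Kint f f))
    (htrans : ∀ p : EuclideanSpace ℝ (Fin 3),
      (‖p‖ : ℂ) * f p 0 = ∑ i : Fin 3, (p i : ℂ) * f p i.succ) :
    0 ≤ (Kform f f).re ∧ (Kform f f).im = 0 ∧
      (Kform f f = 0 ↔ ∃ h : EuclideanSpace ℝ (Fin 3) → ℂ,
        ∀ p : EuclideanSpace ℝ (Fin 3),
          f p 0 = (‖p‖ : ℂ) * h p ∧ ∀ i : Fin 3, f p i.succ = (p i : ℂ) * h p) := by
  classical
  set R : E3 → ℝ := fun p => mink' f p / ‖p‖ with hRdef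
  have hKint : ∀ p, Kint f f p = ((R p : ℝ) : ℂ) := by
    intro p
    rw [Kint, mink_self, hRdef]
    rw [Complex.ofReal_div]
    rfl
  have hRint : Integrable R := by
    have := hint.re
    refine this.congr (Filter.Eventually.of_forall fun p => ?_)
    simp only []
    rw [show RCLike.re (Kint f f p) = (Kint f f p).re from rfl, hKint p, Complex.ofReal_re]
  have hRnonpos : ∀ p, R p ≤ 0 := by
    intro p
    by_cases hp : p = 0
    · subst hp
      simp [hRdef]
    · exact div_nonpos_iff.mpr (Or.inr ⟨mink'_nonpos f p hp (htrans p), norm_nonneg p⟩)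
  have hIR : (∫ p, Kint f f p) = ((∫ p, R p : ℝ) : ℂ) := by
    simp_rw [hKint]
    exact integral_ofReal
  have hIRle : (∫ p, R p) ≤ 0 := integral_nonpos hRnonpos
  have hKform : Kform f f = ((-2 * Real.pi * ∫ p, R p : ℝ) : ℂ) := by
    rw [Kform, hIR]
    push_cast
    ring
  refine ⟨?_, ?_, ?_⟩
  · rw [hKform, Complex.ofReal_re]
    nlinarith [Real.pi_pos]
  · rw [hKform, Complex.ofReal_im]
  have hk0 : Kform f f = 0 ↔ (∫ p, R p) = 0 := by
    rw [hKform, Complex.ofReal_eq_zero]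
    constructor
    · intro h
      rcases mul_eq_zero.mp h with h | h
      · exact absurd h (by nlinarith [Real.pi_pos])
      · exact h
    · intro h
      rw [h, mul_zero]
  rw [hk0]
  constructor
  · intro hI0
    -- R vanishes a.e., hence mink' vanishes everywhere
    have haeneg : (fun p => -R p) =ᵐ[volume] 0 := by
      refine (integral_eq_zero_iff_of_nonneg_ae ?_ hRint.neg).mp ?_
      · exact Filter.Eventually.of_forall fun p => neg_nonneg.mpr (hRnonpos p)
      · simp only [Pi.neg_apply]
        rw [integral_neg, hI0, neg_zero]
    have hae : R =ᵐ[volume] 0 := by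
      filter_upwards [haeneg] with p hp
      simpa [neg_eq_zero] using hp
    have hne : ∀ᵐ p : E3, p ≠ 0 := by
      rw [ae_iff]
      have : {p : E3 | ¬ p ≠ 0} = {0} := by ext p; simp
      rw [this]
      exact measure_singleton 0
    have hae2 : mink' f =ᵐ[volume] (fun _ => 0) := by
      filter_upwards [hae, hne] with p h1 h2
      have h3 : mink' f p / ‖p‖ = 0 := h1
      rcases div_eq_zero_iff.mp h3 with h | h
      · exact h
      · exact absurd h (norm_ne_zero_iff.mpr h2)
    have hM : mink' f = fun _ => 0 :=
      (Continuous.ae_eq_iff_eq volume (mink'_cont f hcont) continuous_const).mp hae2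
    have hall : ∀ p : E3, p ≠ 0 → ∀ i : Fin 3,
        f p i.succ = (p i : ℂ) * (f p 0 / (‖p‖ : ℂ)) :=
      fun p hp => eq_case f p hp (htrans p) (congrFun hM p)
    refine ⟨fun p => f p 0 / (‖p‖ : ℂ), fun p => ?_⟩
    by_cases hp : p = 0
    · subst hp
      have h00 := f_zero_at_origin f hcont hall
      constructor
      · rw [h00 0]
        simp
      · intro i
        rw [h00 i.succ]
        have : ((0:E3)) i = 0 := rfl
        rw [this]
        simp
    · have hpn : ((‖p‖:ℝ):ℂ) ≠ 0 := by simpa using (norm_ne_zero_iff.mpr hp)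
      constructor
      · field_simp
      · exact hall p hp
  · rintro ⟨h, hh⟩
    have hz : ∀ p, R p = 0 := by
      intro p
      have hm : mink f f p = 0 := mink_zero_of_h f h p (hh p).1 (hh p).2
      rw [mink_self] at hm
      have h2 : mink' f p = 0 := by
        unfold mink'
        exact_mod_cast hm
      rw [hRdef]
      simp only [h2, zero_div]
    simp_rw [hz]
    exact integral_zero _ _
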